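/- Let π₂ be a policy minimizing Ψ_α^2 over all policies. Then for every real λ ≥ 2 and every policy q: Ψ_α^λ(π₂) ≤ 2^{λ−2} · Ψ_α^λ(q). In other words, the minimizer of the squared marginal information ratio simultaneously minimizes every (α,λ)-marginal information ratio with λ ≥ 2, up to the factor 2^{λ−2}. -/
import Mathlib


/-- A policy assigns to each context `s` a probability vector over the actions `A`. -/
structure Policy (S A : Type) [Fintype S] [Fintype A] where
  prob : S → A → ℝ
  nonneg : ∀ s a, 0 ≤ prob s a
  sum_eq_one : ∀ s, ∑ a, prob s a = 1

/-- Expected one-step regret of a policy under context distribution `p`. -/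
noncomputable def reg {S A : Type} [Fintype S] [Fintype A]
    (p : S → ℝ) (Δ : S → A → ℝ) (π : Policy S A) : ℝ :=
  ∑ s, p s * ∑ a, Δ s a * π.prob s a

/-- Expected information gain of a policy under context distribution `p`. -/
noncomputable def info {S A : Type} [Fintype S] [Fintype A]
    (p : S → ℝ) (I : S → A → ℝ) (π : Policy S A) : ℝ :=
  ∑ s, p s * ∑ a, I s a * π.prob s a

/-- The `(α, λ)`-marginal information ratio `Ψ_α^λ(π)`. -/
noncomputable def ratio {S A : Type} [Fintype S] [Fintype A]
    (p : S → ℝ) (Δ I : S → A → ℝ) (α lam : ℝ) (π : Policy S A) : ℝ :=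
  (max 0 (reg p Δ π - α)) ^ lam / info p I π

/-- Mixture of two policies. -/
noncomputable def Policy.mix {S A : Type} [Fintype S] [Fintype A]
    (β : ℝ) (hβ0 : 0 ≤ β) (hβ1 : β ≤ 1) (π q : Policy S A) : Policy S A where
  prob s a := (1 - β) * π.prob s a + β * q.prob s a
  nonneg s a := add_nonneg (mul_nonneg (by linarith) (π.nonneg s a))
    (mul_nonneg hβ0 (q.nonneg s a))
  sum_eq_one s := by
    rw [Finset.sum_add_distrib, ← Finset.mul_sum, ← Finset.mul_sum,
      π.sum_eq_one s, q.sum_eq_one s]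
    ring

lemma mix_lin {S A : Type} [Fintype S] [Fintype A]
    (p : S → ℝ) (f : S → A → ℝ) (β : ℝ) (hβ0 : 0 ≤ β) (hβ1 : β ≤ 1)
    (π q : Policy S A) :
    ∑ s, p s * ∑ a, f s a * (Policy.mix β hβ0 hβ1 π q).prob s a
      = (1 - β) * (∑ s, p s * ∑ a, f s a * π.prob s a)
        + β * (∑ s, p s * ∑ a, f s a * q.prob s a) := by
  have h : ∀ s, ∑ a, f s a * ((1 - β) * π.prob s a + β * q.prob s a)
      = (1 - β) * (∑ a, f s a * π.prob s a) + β * (∑ a, f s a * q.prob s a) := by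
    intro s
    rw [Finset.mul_sum, Finset.mul_sum, ← Finset.sum_add_distrib]
    exact Finset.sum_congr rfl fun a _ => by ring
  simp only [Policy.mix, h]
  rw [Finset.mul_sum, Finset.mul_sum, ← Finset.sum_add_distrib]
  exact Finset.sum_congr rfl fun s _ => by ring

lemma info_pos {S A : Type} [Fintype S] [Fintype A]
    (p : S → ℝ) (hp0 : ∀ s, 0 ≤ p s) (hpex : ∃ s, 0 < p s)
    (I : S → A → ℝ) (hI : ∀ s a, 0 < I s a) (π : Policy S A) :
    0 < info p I π := by
  obtain ⟨s₀, hs₀⟩ := hpex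
  have hinner : ∀ s, 0 ≤ ∑ a, I s a * π.prob s a := fun s =>
    Finset.sum_nonneg fun a _ => mul_nonneg (hI s a).le (π.nonneg s a)
  have hex : ∃ a, 0 < π.prob s₀ a := by
    by_contra h
    push_neg at h
    have : ∑ a, π.prob s₀ a = 0 := le_antisymm (Finset.sum_nonpos fun a _ => h a)
      (Finset.sum_nonneg fun a _ => π.nonneg s₀ a)
    rw [π.sum_eq_one s₀] at this
    norm_num at this
  obtain ⟨a₀, ha₀⟩ := hex
  have hinner0 : 0 < ∑ a, I s₀ a * π.prob s₀ a :=
    Finset.sum_pos' (fun a _ => mul_nonneg (hI s₀ a).le (π.nonneg s₀ a))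
      ⟨a₀, Finset.mem_univ a₀, mul_pos (hI s₀ a₀) ha₀⟩
  exact Finset.sum_pos' (fun s _ => mul_nonneg (hp0 s) (hinner s))
    ⟨s₀, Finset.mem_univ s₀, mul_pos hs₀ hinner0⟩

/-- Adaptivity of the squared-ratio minimizer (core of Theorem 3.1): a minimizer `π₂`
of `Ψ_α^2` minimizes every `(α, λ)`-marginal information ratio with `λ ≥ 2` up to a
factor `2^(λ-2)`: for every policy `q`, `Ψ_α^λ(π₂) ≤ 2^(λ-2) · Ψ_α^λ(q)`. -/
theorem stmt_2 {S A : Type} [Fintype S] [Fintype A] [Nonempty S] [Nonempty A]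
    (p : S → ℝ) (hp0 : ∀ s, 0 ≤ p s) (hp1 : ∑ s, p s = 1) (hpex : ∃ s, 0 < p s)
    (Δ I : S → A → ℝ) (hΔ : ∀ s a, 0 ≤ Δ s a) (hI : ∀ s a, 0 < I s a)
    (α : ℝ) (hα : 0 ≤ α)
    (π₂ : Policy S A)
    (hmin : ∀ q : Policy S A, ratio p Δ I α 2 π₂ ≤ ratio p Δ I α 2 q) :
    ∀ lam : ℝ, 2 ≤ lam → ∀ q : Policy S A,
      ratio p Δ I α lam π₂ ≤ 2 ^ (lam - 2) * ratio p Δ I α lam q := by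
  intro lam hlam q
  set m : ℝ := max 0 (reg p Δ π₂ - α) with hm_def
  set mq : ℝ := max 0 (reg p Δ q - α) with hmq_def
  set n : ℝ := info p I π₂ with hn_def
  set nq : ℝ := info p I q with hnq_def
  have hn : 0 < n := info_pos p hp0 hpex I hI π₂
  have hnq : 0 < nq := info_pos p hp0 hpex I hI q
  have hm0 : 0 ≤ m := le_max_left _ _
  have hmq0 : 0 ≤ mq := le_max_left _ _
  -- The λ = 2 minimality, in cleared form
  have h2 : m ^ 2 * nq ≤ mq ^ 2 * n := by
    have := hmin q
    simp only [ratio, ← hm_def, ← hmq_def, ← hn_def, ← hnq_def] at this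
    rw [Real.rpow_two, Real.rpow_two] at this
    rw [div_le_div_iff₀ hn hnq] at this
    linarith
  -- Key: m ≤ 2 * mq, via mixtures
  have hkey : m ≤ 2 * mq := by
    rcases eq_or_lt_of_le hm0 with hm | hm
    · linarith
    have hmix : ∀ β : ℝ, 0 < β → β ≤ 1 →
        0 ≤ (2 * n * m * (mq - m) - m ^ 2 * (nq - n)) + β * (n * (mq - m) ^ 2) := by
      intro β hβ0 hβ1
      set π' := Policy.mix β hβ0.le hβ1 π₂ q with hπ'
      have hreg : reg p Δ π' = (1 - β) * reg p Δ π₂ + β * reg p Δ q :=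
        mix_lin p Δ β hβ0.le hβ1 π₂ q
      have hinfo : info p I π' = (1 - β) * n + β * nq :=
        mix_lin p I β hβ0.le hβ1 π₂ q
      have hn' : 0 < (1 - β) * n + β * nq := by
        rw [← hinfo]; exact info_pos p hp0 hpex I hI π'
      have hM : max 0 (reg p Δ π' - α) ≤ (1 - β) * m + β * mq := by
        apply max_le
        · have h1 : 0 ≤ 1 - β := by linarith
          positivity
        · rw [hreg]
          have h1 : reg p Δ π₂ - α ≤ m := le_max_right _ _
          have h2' : reg p Δ q - α ≤ mq := le_max_right _ _
          nlinarith
      have hminmix := hmin π'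
      simp only [ratio, ← hm_def, ← hn_def] at hminmix
      rw [Real.rpow_two, Real.rpow_two, hinfo, div_le_div_iff₀ hn hn'] at hminmix
      have hMsq : (max 0 (reg p Δ π' - α)) ^ 2 ≤ ((1 - β) * m + β * mq) ^ 2 := by
        apply pow_le_pow_left₀ (le_max_left _ _) hM
      have hchain : m ^ 2 * ((1 - β) * n + β * nq) ≤ ((1 - β) * m + β * mq) ^ 2 * n :=
        hminmix.trans (mul_le_mul_of_nonneg_right hMsq hn.le)
      have hβ : 0 < β := hβ0
      nlinarith [sq_nonneg ((1 - β) * m + β * mq)]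
    -- Let β → 0: the constant term is nonnegative
    have hc : 0 ≤ 2 * n * m * (mq - m) - m ^ 2 * (nq - n) := by
      by_contra hc
      push_neg at hc
      set c := 2 * n * m * (mq - m) - m ^ 2 * (nq - n) with hc_def
      set d := n * (mq - m) ^ 2 with hd_def
      have hd : 0 ≤ d := by positivity
      set β := min 1 (-c / (d + 1)) with hβ_def
      have hβ0 : 0 < β := lt_min one_pos (div_pos (by linarith) (by linarith))
      have hβ1 : β ≤ 1 := min_le_left _ _
      have hβle : β ≤ -c / (d + 1) := min_le_right _ _
      have hge := hmix β hβ0 hβ1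
      have hdb : d * β ≤ d * (-c / (d + 1)) := mul_le_mul_of_nonneg_left hβle hd
      have hlt : c + β * d < 0 := by
        have hdd : d * (-c / (d + 1)) = -c * (d / (d + 1)) := by ring
        have hfrac : d / (d + 1) < 1 := by
          rw [div_lt_one (by linarith)]; linarith
        nlinarith
      linarith
    nlinarith [mul_pos hn hm, mul_nonneg (mul_nonneg hm0 hm0) hnq.le]
  -- Conclude
  rcases eq_or_lt_of_le hlam with hl2 | hl2
  · -- λ = 2
    rw [← hl2]
    norm_num
    exact hmin q
  · -- λ > 2
    simp only [ratio, ← hm_def, ← hmq_def, ← hn_def, ← hnq_def]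
    rcases eq_or_lt_of_le hm0 with hm | hm
    · rw [← hm, Real.zero_rpow (by linarith : lam ≠ 0)]
      rw [zero_div]
      positivity
    · have hmq : 0 < mq := by linarith
      have hml : m ^ lam = m ^ (2:ℝ) * m ^ (lam - 2) := by
        rw [← Real.rpow_add hm]; norm_num
      have hmql : mq ^ lam = mq ^ (2:ℝ) * mq ^ (lam - 2) := by
        rw [← Real.rpow_add hmq]; norm_num
      have hpow : m ^ (lam - 2) ≤ 2 ^ (lam - 2) * mq ^ (lam - 2) := by
        rw [← Real.mul_rpow (by norm_num) hmq0]
        exact Real.rpow_le_rpow hm0 hkey (by linarith)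
      rw [hml, hmql, Real.rpow_two, Real.rpow_two]
      have h1 : 0 ≤ m ^ (lam - 2) := Real.rpow_nonneg hm0 _
      have h2' : 0 ≤ mq ^ (lam - 2) := Real.rpow_nonneg hmq0 _
      have key : m ^ 2 * m ^ (lam - 2) * nq ≤ 2 ^ (lam - 2) * (mq ^ 2 * mq ^ (lam - 2)) * n := by
        calc m ^ 2 * m ^ (lam - 2) * nq = (m ^ 2 * nq) * m ^ (lam - 2) := by ring
          _ ≤ (mq ^ 2 * n) * m ^ (lam - 2) := mul_le_mul_of_nonneg_right h2 h1
          _ ≤ (mq ^ 2 * n) * (2 ^ (lam - 2) * mq ^ (lam - 2)) := by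
              apply mul_le_mul_of_nonneg_left hpow
              positivity
          _ = 2 ^ (lam - 2) * (mq ^ 2 * mq ^ (lam - 2)) * n := by ring
      rw [← mul_div_assoc, div_le_div_iff₀ hn hnq]
      linarith [key]
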